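/- Let F be a field, let k ≤ n be positive integers, and let G be a k×n matrix over F such that every k columns of G are linearly independent (i.e., G is the generator matrix of an MDS code). For each i ∈ {1,…,k} let S_i ⊆ {1,…,n} be a set of column indices such that G_{ij} = 0 for all j ∈ S_i. Then for every nonempty subset I ⊆ {1,…,k}, one has k − |I| ≥ |⋂_{i∈I} S_i|. -/

import Mathlib

/-- If every `k` columns of a `k × n` matrix `G` over a field `F` are
linearly independent (i.e. `G` generates an MDS code), and `S i` is a set of positions of
zeros in row `i` of `G`, then for every nonempty `I ⊆ [k]` we have
`k - |I| ≥ |⋂_{i ∈ I} S i|`. -/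
theorem mds_support_condition (F : Type*) [Field F] (k n : ℕ) (hk : 1 ≤ k) (hkn : k ≤ n)
    (G : Matrix (Fin k) (Fin n) F)
    (hMDS : ∀ s : Finset (Fin n), s.card = k →
      LinearIndependent F (fun j : s => fun i : Fin k => G i j))
    (S : Fin k → Finset (Fin n))
    (hzero : ∀ i : Fin k, ∀ j : Fin n, j ∈ S i → G i j = 0) :
    ∀ I : Finset (Fin k), ∀ hI : I.Nonempty,
      ((I.inf' hI S).card : ℤ) ≤ (k : ℤ) - I.card := by
  intro I hI
  set T := I.inf' hI S with hTdef
  have hTmem : ∀ j : Fin n, j ∈ T → ∀ i ∈ I, j ∈ S i := by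
    intro j hj i hi
    exact Finset.inf'_le S hi hj
  have hIk : I.card ≤ k := by
    simpa using Finset.card_le_univ I
  have hIpos : 1 ≤ I.card := hI.card_pos
  suffices h : T.card + I.card ≤ k by omega
  by_contra hlt
  push_neg at hlt
  set t := k - I.card + 1 with ht
  have ht_le_T : t ≤ T.card := by omega
  have ht_le_k : t ≤ k := by omega
  obtain ⟨T', hT'sub, hT'card⟩ := Finset.exists_subset_card_eq ht_le_T
  have hcard_n : k ≤ Fintype.card (Fin n) := by simpa using hkn
  obtain ⟨s, hsub, hscard⟩ :=
    Finset.exists_superset_card_eq (s := T') (hT'card.le.trans ht_le_k) hcard_n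
  have hLI := hMDS s hscard
  -- restrict to T'
  have he : Function.Injective (fun j : T' => (⟨j.1, hsub j.2⟩ : s)) := by
    intro a b hab
    exact Subtype.ext (congrArg (fun x : s => (x : Fin n)) hab)
  have hLI2 : LinearIndependent F (fun j : T' => fun i : Fin k => G i (j : Fin n)) :=
    hLI.comp _ he
  -- projection onto coordinates outside I
  set π : (Fin k → F) →ₗ[F] (↥(Iᶜ : Finset (Fin k)) → F) :=
    LinearMap.funLeft F F (fun i : ↥(Iᶜ : Finset (Fin k)) => (i : Fin k)) with hπ
  have hspanI : ∀ v ∈ Submodule.span F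
      (Set.range (fun j : T' => fun i : Fin k => G i (j : Fin n))), ∀ i ∈ I, v i = 0 := by
    intro v hv
    induction hv using Submodule.span_induction with
    | mem x hx =>
      obtain ⟨j, rfl⟩ := hx
      intro i hi
      exact hzero i j (hTmem j (hT'sub j.2) i hi)
    | zero => intro i _; rfl
    | add x y _ _ hx hy => intro i hi; simp [hx i hi, hy i hi]
    | smul c x _ hx => intro i hi; simp [hx i hi]
  have hdisj : Disjoint
      (Submodule.span F (Set.range (fun j : T' => fun i : Fin k => G i (j : Fin n))))
      (LinearMap.ker π) := by
    rw [Submodule.disjoint_def]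
    intro v hv hker
    have hvI : ∀ i ∈ I, v i = 0 := hspanI v hv
    have hvIc : ∀ i : ↥(Iᶜ : Finset (Fin k)), v i = 0 := by
      intro i
      have := LinearMap.mem_ker.mp hker
      exact congrFun this i
    funext i
    by_cases hi : i ∈ I
    · exact hvI i hi
    · exact hvIc ⟨i, Finset.mem_compl.mpr hi⟩
  have hLI3 := hLI2.map hdisj
  have hcard := hLI3.fintype_card_le_finrank
  rw [Module.finrank_pi] at hcard
  simp only [Fintype.card_coe, Finset.card_compl, Fintype.card_fin, hT'card] at hcard
  omega
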